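/- Let X be the ℓ¹-sum of the spaces ℓ∞^n, n ∈ ℕ, and (x_k) the enumeration of all basis vectors e_j^n (1 ≤ j ≤ n). Then 0 is a weak cluster point of (x_k) in X: for every finite set g^1,…,g^m ∈ X* and every ε > 0 there exists a member x of the sequence with |g^i(x)| < ε for all i = 1,…,m. -/

import Mathlib

open Filter Topology NormedSpace

/-- The `ℓ¹`-sum of the finite-dimensional spaces `ℓ∞ⁿ = (Fin (n+1) → ℝ)` (sup norm). -/
abbrev LOneSumLinf : Type := lp (fun n : ℕ => Fin (n + 1) → ℝ) 1

/-- The basis vector `e_j^n` of the `n`-th summand `ℓ∞ⁿ`, viewed in the `ℓ¹`-sum. -/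
noncomputable def basisVec (n : ℕ) (j : Fin (n + 1)) : LOneSumLinf :=
  lp.single 1 n (Pi.single j (1 : ℝ))

/-- Let `(x_k)` enumerate all the basis vectors `e_j^n` of the `ℓ¹`-sum of the
spaces `ℓ∞ⁿ`. Then `0` is a weak cluster point of `(x_k)`: for all `g^1, …, g^m ∈ X*`, every
`ε > 0` and every `N`, there is a member `x_k` (with `k ≥ N`) of the sequence such that
`|g^i(x_k)| < ε` for all `i = 1, …, m`. -/

lemma norm_single' (n : ℕ) (s : Fin (n + 1) → ℝ) :
    ‖(lp.single 1 n s : LOneSumLinf)‖ = ‖s‖ := by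
  have := lp.norm_single (p := (1 : ENNReal)) (E := fun n : ℕ => Fin (n + 1) → ℝ) (by norm_num)
    n s
  simpa using this

lemma single_eq_sum (n : ℕ) (s : Fin (n + 1) → ℝ) :
    (lp.single 1 n s : LOneSumLinf) = ∑ j, s j • basisVec n j := by
  apply lp.ext
  funext k
  rw [lp.coeFn_sum]
  simp only [Finset.sum_apply, basisVec]
  by_cases h : k = n
  · subst h
    simp only [lp.single_apply_self]
    have h3 : ∀ j : Fin (k+1), (s j • (lp.single 1 k (Pi.single j (1:ℝ)) : LOneSumLinf)) k = s j • (Pi.single j (1:ℝ) : Fin (k+1) → ℝ) := by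
      intro j
      rw [lp.coeFn_smul, Pi.smul_apply, lp.single_apply_self]
    rw [Finset.sum_congr rfl fun j _ => h3 j]
    funext t
    simp [Pi.single_apply]
  · simp only [lp.single_apply_ne _ _ _ h]
    rw [Finset.sum_eq_zero]
    intro j _
    rw [lp.coeFn_smul, Pi.smul_apply, lp.single_apply_ne _ _ _ h, smul_zero]

lemma sum_abs_le (g : StrongDual ℝ LOneSumLinf) (n : ℕ) :
    ∑ j, |g (basisVec n j)| ≤ ‖g‖ := by
  set s : Fin (n + 1) → ℝ := fun j => if 0 ≤ g (basisVec n j) then 1 else -1 with hs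
  have h1 : g (lp.single 1 n s) = ∑ j, |g (basisVec n j)| := by
    rw [single_eq_sum, map_sum]
    refine Finset.sum_congr rfl fun j _ => ?_
    rw [map_smul]
    by_cases h : 0 ≤ g (basisVec n j)
    · simp [hs, h, abs_of_nonneg]
    · simp only [hs, if_neg h, smul_eq_mul, abs_of_neg (lt_of_not_ge h)]; ring
  have h2 : ‖(lp.single 1 n s : LOneSumLinf)‖ ≤ 1 := by
    rw [norm_single']
    apply pi_norm_le_iff_of_nonneg zero_le_one |>.2
    intro j
    by_cases h : 0 ≤ g (basisVec n j) <;> simp [hs, h]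
  calc ∑ j, |g (basisVec n j)| = g (lp.single 1 n s) := h1.symm
    _ ≤ ‖g‖ * ‖(lp.single 1 n s : LOneSumLinf)‖ := le_trans (le_abs_self _) (g.le_opNorm _)
    _ ≤ ‖g‖ * 1 := mul_le_mul_of_nonneg_left h2 (norm_nonneg g)
    _ = ‖g‖ := mul_one _

theorem statement9 (E : ℕ ≃ (Σ n : ℕ, Fin (n + 1)))
    (x : ℕ → LOneSumLinf) (hx : ∀ k, x k = basisVec (E k).1 (E k).2) :
    ∀ (N m : ℕ) (g : Fin m → StrongDual ℝ LOneSumLinf) (ε : ℝ), 0 < ε →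
      ∃ k, N ≤ k ∧ ∀ i : Fin m, |g i (x k)| < ε := by
  classical
  intro N m g ε hε
  set K : ℝ := ∑ i, ‖g i‖ with hK
  set n : ℕ := ⌈K / ε⌉₊ + N with hn
  set B1 : Finset (Fin (n + 1)) :=
    Finset.univ.filter (fun j => ∃ i, ε ≤ |g i (basisVec n j)|) with hB1
  set B2 : Finset (Fin (n + 1)) :=
    Finset.univ.filter (fun j => E.symm ⟨n, j⟩ < N) with hB2
  have hcard1 : B1.card ≤ ⌈K / ε⌉₊ := by
    have key : (B1.card : ℝ) * ε ≤ K := by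
      calc (B1.card : ℝ) * ε = ∑ _j ∈ B1, ε := by rw [Finset.sum_const, nsmul_eq_mul]
        _ ≤ ∑ j ∈ B1, ∑ i, |g i (basisVec n j)| := by
            refine Finset.sum_le_sum fun j hj => ?_
            obtain ⟨i, hi⟩ := (Finset.mem_filter.mp hj).2
            exact le_trans hi (Finset.single_le_sum (f := fun i => |g i (basisVec n j)|) (fun i _ => abs_nonneg _) (Finset.mem_univ i))
        _ ≤ ∑ j : Fin (n + 1), ∑ i, |g i (basisVec n j)| := by
            refine Finset.sum_le_sum_of_subset_of_nonneg (Finset.subset_univ _) fun j _ _ => ?_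
            exact Finset.sum_nonneg fun i _ => abs_nonneg _
        _ = ∑ i, ∑ j, |g i (basisVec n j)| := Finset.sum_comm
        _ ≤ ∑ i, ‖g i‖ := Finset.sum_le_sum fun i _ => sum_abs_le (g i) n
    have : (B1.card : ℝ) ≤ K / ε := (le_div_iff₀ hε).mpr key
    exact_mod_cast this.trans (Nat.le_ceil _)
  have hcard2 : B2.card ≤ N := by
    have : ∀ j ∈ B2, E.symm ⟨n, j⟩ ∈ Finset.range N := by
      intro j hj
      exact Finset.mem_range.mpr (Finset.mem_filter.mp hj).2
    calc B2.card ≤ (Finset.range N).card :=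
          Finset.card_le_card_of_injOn (fun j => E.symm ⟨n, j⟩) this (by
            intro a _ b _ hab
            have := E.symm.injective hab
            exact (Sigma.mk.inj_iff.mp this).2.eq)
      _ = N := Finset.card_range N
  have hlt : (B1 ∪ B2).card < (Finset.univ : Finset (Fin (n + 1))).card := by
    calc (B1 ∪ B2).card ≤ B1.card + B2.card := Finset.card_union_le _ _
      _ ≤ ⌈K / ε⌉₊ + N := add_le_add hcard1 hcard2
      _ < n + 1 := by omega
      _ = (Finset.univ : Finset (Fin (n + 1))).card := by simp
  have hne : B1 ∪ B2 ≠ Finset.univ := fun h => absurd (h ▸ hlt) (lt_irrefl _)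
  obtain ⟨j, hj⟩ : ∃ j, j ∉ B1 ∪ B2 := by
    by_contra h
    push_neg at h
    exact hne (Finset.eq_univ_iff_forall.mpr fun j => h j)
  refine ⟨E.symm ⟨n, j⟩, ?_, ?_⟩
  · by_contra h
    exact hj (Finset.mem_union_right _ (Finset.mem_filter.mpr ⟨Finset.mem_univ _, by omega⟩))
  · intro i
    rw [hx, Equiv.apply_symm_apply]
    by_contra h
    exact hj (Finset.mem_union_left _ (Finset.mem_filter.mpr ⟨Finset.mem_univ _, ⟨i, not_lt.mp h⟩⟩))
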